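/- For every cycle C_n with n ≥ 4, the threshold strong dimension of C_n equals 2, while the strong isometric dimension of C_n equals ⌈n/2⌉; hence threshold strong dimension and strong isometric dimension are distinct graph parameters. -/

import Mathlib

open SimpleGraph
open scoped Fin.NatCast Fin.CommRing

/-- The strong product of `k` copies of the path `P_n` (vertices labeled `0,…,n-1`). -/
def strongPow (n k : ℕ) : SimpleGraph (Fin k → Fin n) where
  Adj x y := x ≠ y ∧ ∀ i, ((x i : ℤ) - (y i : ℤ)).natAbs ≤ 1
  symm := ⟨fun x y h => ⟨h.1.symm, fun i => by have := h.2 i; omega⟩⟩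
  loopless := ⟨fun x h => h.1 rfl⟩

/-- `w` strongly resolves `u` and `v`: `v` lies on a shortest `u`–`w` path or
`u` lies on a shortest `v`–`w` path. -/
def stronglyResolves {V : Type*} (G : SimpleGraph V) (w u v : V) : Prop :=
  G.dist u w = G.dist u v + G.dist v w ∨ G.dist v w = G.dist v u + G.dist u w

/-- `W` is a strong resolving set of `G`. -/
def isStrongResolvingSet {V : Type*} (G : SimpleGraph V) (W : Set V) : Prop :=
  ∀ u v : V, u ≠ v → ∃ w ∈ W, stronglyResolves G w u v

/-- The strong dimension `β_s(G)`. -/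
noncomputable def strongDim (V : Type*) [Fintype V] (G : SimpleGraph V) : ℕ :=
  sInf {n | ∃ W : Finset V, W.card = n ∧ isStrongResolvingSet G ↑W}

/-- `u` and `v` are mutually maximally distant in `G`. -/
def mutuallyMaxDistant {V : Type*} (G : SimpleGraph V) (u v : V) : Prop :=
  (∀ x, G.Adj v x → G.dist u x ≤ G.dist u v) ∧ (∀ x, G.Adj u x → G.dist v x ≤ G.dist v u)

/-- The strong resolving graph `G_SR`. -/
def strongResolvingGraph {V : Type*} (G : SimpleGraph V) : SimpleGraph V where
  Adj u v := u ≠ v ∧ mutuallyMaxDistant G u v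
  symm := ⟨fun u v h => ⟨h.1.symm, h.2.2, h.2.1⟩⟩
  loopless := ⟨fun u h => h.1 rfl⟩

/-- The vertex covering number `α(H)`. -/
noncomputable def coverNumber (V : Type*) [Fintype V] (H : SimpleGraph V) : ℕ :=
  sInf {n | ∃ C : Finset V, C.card = n ∧ ∀ u v, H.Adj u v → u ∈ C ∨ v ∈ C}

/-- The threshold strong dimension `τ_s(G)`. -/
noncomputable def thresholdStrongDim (V : Type*) [Fintype V] (G : SimpleGraph V) : ℕ :=
  sInf {n | ∃ H : SimpleGraph V, G ≤ H ∧
    ∃ W : Finset V, W.card = n ∧ isStrongResolvingSet H ↑W}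

/-- A `W`-resolved embedding of `G` in the strong product of `k` copies of `P_{D+1}`,
where `W` is enumerated by `w : Fin k → V`.  The induced subgraph `φ(G)` is represented
by the comap (pullback) of the strong product along the injective map `φ`. -/
def IsWResolvedEmbedding {V : Type*} (G : SimpleGraph V) (D k : ℕ) (w : Fin k → V)
    (φ : V → (Fin k → Fin (D + 1))) : Prop :=
  Function.Injective φ ∧
  (∀ u v, G.Adj u v → (strongPow (D + 1) k).Adj (φ u) (φ v)) ∧
  ∀ x i, ((φ x i : ℕ)) = (SimpleGraph.comap φ (strongPow (D + 1) k)).dist x (w i)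

/-- The image `φ(G)` is an isometric subgraph of the strong product. -/
def IsIsometricImage {V : Type*} (D k : ℕ) (φ : V → (Fin k → Fin (D + 1))) : Prop :=
  ∀ u v, (SimpleGraph.comap φ (strongPow (D + 1) k)).dist u v
      = (strongPow (D + 1) k).dist (φ u) (φ v)

/-- `W` is a (metric) resolving set of `G`. -/
def isResolvingSet {V : Type*} (G : SimpleGraph V) (W : Set V) : Prop :=
  ∀ u v : V, u ≠ v → ∃ w ∈ W, G.dist u w ≠ G.dist v w

/-- The metric dimension `β(G)`. -/
noncomputable def metricDim (V : Type*) [Fintype V] (G : SimpleGraph V) : ℕ :=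
  sInf {n | ∃ W : Finset V, W.card = n ∧ isResolvingSet G ↑W}

/-- The strong isometric dimension: the smallest `k` such that `G` embeds isometrically in
the strong product of `k` copies of some path. -/
noncomputable def strongIsoDim (V : Type*) (G : SimpleGraph V) : ℕ :=
  sInf {k | ∃ (m : ℕ) (φ : V → (Fin k → Fin m)),
    ∀ u v : V, (strongPow m k).dist (φ u) (φ v) = G.dist u v}

lemma reach_and_dist_le_of_step {V : Type*} (G : SimpleGraph V) (ρ : V → V → ℕ)
    (hstep : ∀ u v, u ≠ v → ∃ u', G.Adj u u' ∧ ρ u' v < ρ u v) :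
    ∀ u v, G.Reachable u v ∧ G.dist u v ≤ ρ u v := by
  intro u v
  generalize hd : ρ u v = d
  induction d using Nat.strong_induction_on generalizing u with
  | _ d IH =>
    by_cases huv : u = v
    · subst huv; exact ⟨Reachable.refl u, by simp [SimpleGraph.dist_self]⟩
    · obtain ⟨u', hadj, hlt⟩ := hstep u v huv
      rw [hd] at hlt
      obtain ⟨hreach, hdist⟩ := IH (ρ u' v) hlt u' rfl
      refine ⟨(hadj.reachable).trans hreach, ?_⟩
      obtain ⟨p, hp⟩ := hreach.exists_walk_length_eq_dist
      have h2 := SimpleGraph.dist_le (Walk.cons hadj p)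
      simp only [Walk.length_cons, hp] at h2
      omega

lemma natAbs_le_walk_length {V : Type*} {G : SimpleGraph V} (g : V → ℤ)
    (hg : ∀ u v, G.Adj u v → (g u - g v).natAbs ≤ 1) :
    ∀ {u v : V} (p : G.Walk u v), (g u - g v).natAbs ≤ p.length := by
  intro u v p
  induction p with
  | nil => simp
  | @cons a b c h p IH =>
    have := hg _ _ h
    simp only [Walk.length_cons]
    omega

def chebF {k m : ℕ} (x y : Fin k → Fin m) : ℕ :=
  Finset.univ.sup fun i => ((x i : ℤ) - (y i : ℤ)).natAbs

lemma chebF_coord_le {k m : ℕ} (x y : Fin k → Fin m) (i : Fin k) :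
    ((x i : ℤ) - (y i : ℤ)).natAbs ≤ chebF x y :=
  Finset.le_sup (f := fun i => ((x i : ℤ) - (y i : ℤ)).natAbs) (Finset.mem_univ i)

lemma chebF_eq_zero {k m : ℕ} {x y : Fin k → Fin m} (h : chebF x y = 0) : x = y := by
  funext i
  have := chebF_coord_le x y i
  rw [h, Nat.le_zero] at this
  have h2 : (x i : ℤ) = y i := by omega
  exact Fin.ext (by exact_mod_cast h2)

lemma strongPow_reach_and_dist_le (m k : ℕ) (x y : Fin k → Fin m) :
    (strongPow m k).Reachable x y ∧ (strongPow m k).dist x y ≤ chebF x y := by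
  refine reach_and_dist_le_of_step _ chebF ?_ x y
  intro u v huv
  obtain ⟨i0, hi0⟩ := Function.ne_iff.mp huv
  have hne : (u i0 : ℕ) ≠ (v i0 : ℕ) := fun h => hi0 (Fin.ext h)
  refine ⟨fun i => if h : (u i : ℕ) < v i then ⟨u i + 1, by omega⟩
    else if h2 : (v i : ℕ) < u i then ⟨(u i : ℕ) - 1, by omega⟩ else u i, ?_, ?_⟩
  · show _ ∧ _
    constructor
    · intro h
      have := congrFun h i0
      rcases Nat.lt_trichotomy (u i0 : ℕ) (v i0 : ℕ) with h1 | h1 | h1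
      · rw [dif_pos h1] at this
        have h9 := congrArg Fin.val this; simp only [] at h9; omega
      · exact hne h1
      · rw [dif_neg (by omega), dif_pos h1] at this
        have h9 := congrArg Fin.val this; simp only [] at h9; omega
    · intro i
      by_cases h1 : (u i : ℕ) < v i
      · simp only [dif_pos h1, Fin.val_mk]; omega
      · by_cases h2 : (v i : ℕ) < u i
        · simp only [dif_neg h1, dif_pos h2]; omega
        · simp only [dif_neg h1, dif_neg h2]; simp
  · have hd1 : 1 ≤ chebF u v := by
      have := chebF_coord_le u v i0
      omega
    have : ∀ i : Fin k, ((((if h : (u i : ℕ) < v i then (⟨u i + 1, by omega⟩ : Fin m)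
        else if h2 : (v i : ℕ) < u i then ⟨(u i : ℕ) - 1, by omega⟩ else u i) : Fin m) : ℤ)
        - (v i : ℤ)).natAbs ≤ chebF u v - 1 := by
      intro i
      have hle := chebF_coord_le u v i
      by_cases h1 : (u i : ℕ) < v i
      · simp only [dif_pos h1]; simp; omega
      · by_cases h2 : (v i : ℕ) < u i
        · simp only [dif_neg h1, dif_pos h2]; simp; omega
        · simp only [dif_neg h1, dif_neg h2]; omega
    calc chebF _ v ≤ chebF u v - 1 := Finset.sup_le fun i _ => this i
    _ < chebF u v := by omega

lemma strongPow_dist_eq (m k : ℕ) (x y : Fin k → Fin m) :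
    (strongPow m k).dist x y = chebF x y := by
  refine le_antisymm (strongPow_reach_and_dist_le m k x y).2 ?_
  obtain ⟨p, hp⟩ := (strongPow_reach_and_dist_le m k x y).1.exists_walk_length_eq_dist
  refine Finset.sup_le fun i _ => ?_
  have := natAbs_le_walk_length (G := strongPow m k) (fun z => (z i : ℤ))
    (fun a b h => (show a ≠ b ∧ ∀ j, ((a j : ℤ) - (b j : ℤ)).natAbs ≤ 1 from h).2 i) p
  omega

lemma fin_sub_val {n : ℕ} (a b : Fin n) :
    (a - b).val = if b.val ≤ a.val then a.val - b.val else a.val + n - b.val := by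
  have h1 := a.is_lt
  have h2 := b.is_lt
  rw [Fin.sub_def]
  show ((n - b.val) + a.val) % n = _
  split
  · next h =>
    have e : (n - b.val) + a.val = (a.val - b.val) + n := by omega
    rw [e, Nat.add_mod_right, Nat.mod_eq_of_lt (by omega)]
  · rw [Nat.mod_eq_of_lt (by omega)]; omega

/-- cycle metric -/
def cd (n : ℕ) (a b : Fin n) : ℕ := min (b - a).val (a - b).val

lemma cd_comm {n : ℕ} (a b : Fin n) : cd n a b = cd n b a := by
  unfold cd; omega

lemma cd_vals {n : ℕ} (a b : Fin n) :
    (a = b ∧ (b - a).val = 0 ∧ (a - b).val = 0) ∨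
    (a ≠ b ∧ (b - a).val ≠ 0 ∧ (a - b).val ≠ 0 ∧ (a - b).val = n - (b - a).val) := by
  have h1 := a.is_lt
  have h2 := b.is_lt
  have e1 := fin_sub_val a b
  have e2 := fin_sub_val b a
  by_cases h : a = b
  · subst h; left
    simp only [le_refl, if_true] at e1 e2
    exact ⟨rfl, by omega, by omega⟩
  · right
    have hv : a.val ≠ b.val := fun hh => h (Fin.ext hh)
    refine ⟨h, ?_, ?_, ?_⟩ <;>
    · rcases le_or_gt a.val b.val with hc | hc <;>
        [skip; skip] <;> split at e1 <;> split at e2 <;> omega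

lemma cd_self {n : ℕ} (a : Fin n) : cd n a a = 0 := by
  rcases cd_vals a a with ⟨_, h1, h2⟩ | ⟨h, _⟩
  · unfold cd; omega
  · exact absurd rfl h

lemma cd_le_half {n : ℕ} (a b : Fin n) : cd n a b ≤ n / 2 := by
  rcases cd_vals a b with ⟨_, h1, h2⟩ | ⟨_, h1, h2, h3⟩ <;> (unfold cd; omega)

lemma cycle_adj_succ {n : ℕ} [NeZero n] (hn : 4 ≤ n) (a : Fin n) :
    (cycleGraph n).Adj a (a + 1) := by
  rw [cycleGraph_adj']
  right
  have e : a + 1 - a = 1 := by ring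
  rw [e, Fin.val_one']
  exact Nat.mod_eq_of_lt (by omega)

lemma cycle_walk_ge {n : ℕ} (hn : 4 ≤ n) :
    ∀ {a b : Fin n} (p : (cycleGraph n).Walk a b), cd n a b ≤ p.length := by
  haveI : NeZero n := ⟨by omega⟩
  intro a b p
  induction p with
  | nil => simp [cd_self]
  | @cons a c b h p IH =>
    rw [Walk.length_cons]
    rw [cycleGraph_adj'] at h
    have key : cd n a b ≤ cd n c b + 1 := by
      have hvab := cd_vals a b
      have hvcb := cd_vals c b
      have hvac := cd_vals a c
      have hvca := cd_vals c a
      have e1 : b - a = (b - c) + (c - a) := by ring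
      have e2 : (b - a).val = ((b - c).val + (c - a).val) % n := by
        rw [e1, Fin.val_add]
      have l1 := (b - c).is_lt
      have l2 := (c - a).is_lt
      have e3 : (b-a).val = (b-c).val + (c-a).val ∨
          (b-a).val + n = (b-c).val + (c-a).val := by
        rcases Nat.lt_or_ge ((b - c).val + (c - a).val) n with hh | hh
        · left; rw [e2, Nat.mod_eq_of_lt hh]
        · right; rw [e2]
          have e4 : (b-c).val + (c-a).val = ((b-c).val + (c-a).val - n) + n := by omega
          rw [e4, Nat.add_mod_right, Nat.mod_eq_of_lt (by omega)]
      unfold cd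
      rcases h with h | h
      · rcases hvca with ⟨hh,hr⟩ | ⟨_, _, _, hca⟩
        · rw [hh] at h ⊢; omega
        · rw [h] at hca
          rcases hvab with ⟨hh2, h5, h6⟩ | ⟨_, h5, h6, h7⟩ <;>
            rcases hvcb with ⟨hh3, g5, g6⟩ | ⟨_, g5, g6, g7⟩ <;> omega
      · rcases hvca with ⟨hh,hr⟩ | ⟨_, _, _, hca⟩
        · rw [hh] at h ⊢; omega
        · rw [hca] at *
          rcases hvab with ⟨hh2, h5, h6⟩ | ⟨_, h5, h6, h7⟩ <;>
            rcases hvcb with ⟨hh3, g5, g6⟩ | ⟨_, g5, g6, g7⟩ <;> omega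
    omega

lemma cycle_dist_le_walkplus {n : ℕ} [NeZero n] (hn : 4 ≤ n) :
    ∀ (t : ℕ) (a : Fin n), (cycleGraph n).Reachable a (a + (t : Fin n)) ∧
      (cycleGraph n).dist a (a + (t : Fin n)) ≤ t := by
  intro t
  induction t with
  | zero =>
    intro a
    simp only [Nat.cast_zero, add_zero]
    exact ⟨Reachable.refl a, by simp [SimpleGraph.dist_self]⟩
  | succ t IH =>
    intro a
    obtain ⟨hr, hd⟩ := IH a
    have hcast : ((t+1 : ℕ) : Fin n) = (t : Fin n) + 1 := by push_cast; ring
    have hadj := cycle_adj_succ hn (a + (t : Fin n))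
    have he : a + (t : Fin n) + 1 = a + ((t+1 : ℕ) : Fin n) := by rw [hcast]; ring
    rw [he] at hadj
    obtain ⟨p, hp⟩ := hr.exists_walk_length_eq_dist
    refine ⟨hr.trans hadj.reachable, ?_⟩
    have h2 := SimpleGraph.dist_le (p.concat hadj)
    rw [Walk.length_concat, hp] at h2
    omega

lemma cycle_reachable {n : ℕ} (hn : 4 ≤ n) (a b : Fin n) :
    (cycleGraph n).Reachable a b := by
  haveI : NeZero n := ⟨by omega⟩
  have h := (cycle_dist_le_walkplus hn (b - a).val a).1
  rwa [Fin.cast_val_eq_self, add_sub_cancel] at h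

lemma cycle_connected {n : ℕ} (hn : 4 ≤ n) : (cycleGraph n).Connected := by
  rw [connected_iff]
  exact ⟨fun a b => cycle_reachable hn a b, ⟨⟨0, by omega⟩⟩⟩

lemma cycle_dist_eq_cd {n : ℕ} (hn : 4 ≤ n) (a b : Fin n) :
    (cycleGraph n).dist a b = cd n a b := by
  haveI : NeZero n := ⟨by omega⟩
  refine le_antisymm ?_ ?_
  · have h1 := (cycle_dist_le_walkplus hn (b - a).val a).2
    rw [Fin.cast_val_eq_self, add_sub_cancel] at h1
    have h2 := (cycle_dist_le_walkplus hn (a - b).val b).2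
    rw [Fin.cast_val_eq_self, add_sub_cancel] at h2
    rw [SimpleGraph.dist_comm] at h2
    unfold cd; omega
  · obtain ⟨p, hp⟩ := (cycle_reachable hn a b).exists_walk_length_eq_dist
    rw [← hp]
    exact cycle_walk_ge hn p

lemma cd_triangle {n : ℕ} (hn : 4 ≤ n) (a b c : Fin n) :
    cd n a c ≤ cd n a b + cd n b c := by
  have h := (cycle_connected hn).dist_triangle (u := a) (v := b) (w := c)
  rwa [cycle_dist_eq_cd hn, cycle_dist_eq_cd hn, cycle_dist_eq_cd hn] at h

lemma cd_witness_half {n : ℕ} [NeZero n] (hn : 4 ≤ n) (u v : Fin n)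
    (huv : u ≠ v) (hr : (v - u).val ≤ n - (v - u).val) :
    ∃ w : Fin n, w.val < (n+1)/2 ∧
      (cd n u w = cd n u v + cd n v w ∨ cd n v w = cd n u v + cd n u w) := by
  set r := (v - u).val with hrdef
  rcases cd_vals u v with ⟨he, _⟩ | ⟨_, hr0, _, hs⟩
  · exact absurd he huv
  · have hrn : r < n := (v - u).is_lt
    have hcuv : cd n u v = r := by unfold cd; omega
    by_cases hv : v.val < (n+1)/2
    · exact ⟨v, hv, Or.inl (by rw [cd_self, hcuv]; omega)⟩
    · set M := n / 2 with hM
      have hMval : ((M : ℕ) : Fin n).val = M := by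
        rw [Fin.val_natCast, Nat.mod_eq_of_lt (by omega)]
      refine ⟨v - (M : Fin n), ?_, ?_⟩
      · have hh := fin_sub_val v ((M : ℕ) : Fin n)
        rw [hMval] at hh
        rw [hh]
        have := v.is_lt
        split <;> omega
      · set w := v - (M : Fin n) with hw
        have h1 : (v - w).val = M := by
          rw [hw]
          have e : v - (v - (M : Fin n)) = (M : Fin n) := by ring
          rw [e, hMval]
        have hMne : M ≠ 0 := by omega
        have h2 : cd n v w = M := by
          have hlt := (w - v).is_lt
          rcases cd_vals v w with ⟨_, _, h0⟩ | ⟨_, _, _, hs2⟩ <;> (unfold cd; omega)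
        have h3 : (w - u) = (v - u) - (M : Fin n) := by rw [hw]; ring
        have h4 : (w - u).val = if M ≤ r then r - M else r + n - M := by
          rw [h3]
          have hh := fin_sub_val (v - u) ((M : ℕ) : Fin n)
          rw [hMval] at hh
          rw [hh, hrdef]
        have h5 : cd n u w = M - r := by
          have hlt := (w - u).is_lt
          have hlt2 := (u - w).is_lt
          rcases cd_vals u w with ⟨_, hz, hz2⟩ | ⟨_, hz, hz2, hs2⟩ <;>
            (unfold cd; split at h4 <;> omega)
        refine Or.inr ?_
        rw [h2, h5, hcuv]
        omega

lemma cd_witness {n : ℕ} (hn : 4 ≤ n) (u v : Fin n) (huv : u ≠ v) :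
    ∃ w : Fin n, w.val < (n+1)/2 ∧
      (cd n u w = cd n u v + cd n v w ∨ cd n v w = cd n u v + cd n u w) := by
  haveI : NeZero n := ⟨by omega⟩
  rcases cd_vals u v with ⟨he, _⟩ | ⟨_, h1, h2, h3⟩
  · exact absurd he huv
  · rcases le_or_gt ((v - u).val) (n - (v - u).val) with h | h
    · exact cd_witness_half hn u v huv h
    · obtain ⟨w, hw1, hw2⟩ := cd_witness_half hn v u (Ne.symm huv)
        (by rw [h3]; omega)
      rw [cd_comm v u] at hw2
      exact ⟨w, hw1, hw2.symm⟩

lemma ilt_of_half {n : ℕ} (hn : 4 ≤ n) (i : Fin ((n+1)/2)) : i.val < n := by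
  have := i.is_lt; omega

lemma cd_lt_n {n : ℕ} (hn : 4 ≤ n) (a b : Fin n) : cd n a b < n := by
  have := cd_le_half a b; omega

def sphi (n : ℕ) (hn : 4 ≤ n) (a : Fin n) : Fin ((n+1)/2) → Fin n :=
  fun i => ⟨cd n a ⟨i.val, ilt_of_half hn i⟩, cd_lt_n hn _ _⟩

lemma sdim_mem {n : ℕ} (hn : 4 ≤ n) :
    ∃ (m : ℕ) (φ : Fin n → (Fin ((n+1)/2) → Fin m)),
      ∀ u v, (strongPow m ((n+1)/2)).dist (φ u) (φ v) = (cycleGraph n).dist u v := by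
  refine ⟨n, sphi n hn, ?_⟩
  intro u v
  rw [strongPow_dist_eq, cycle_dist_eq_cd hn]
  apply Nat.le_antisymm
  · unfold chebF
    refine Finset.sup_le fun i _ => ?_
    simp only [sphi, Fin.val_mk]
    have t1 := cd_triangle hn u v ⟨i.val, ilt_of_half hn i⟩
    have t2 := cd_triangle hn v u ⟨i.val, ilt_of_half hn i⟩
    rw [cd_comm v u] at t2
    omega
  · by_cases huv : u = v
    · subst huv; rw [cd_self]; omega
    · obtain ⟨w, hw1, hw2⟩ := cd_witness hn u v huv
      have hcle := chebF_coord_le (sphi n hn u) (sphi n hn v) ⟨w.val, hw1⟩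
      simp only [sphi, Fin.val_mk] at hcle
      have hww : (⟨w.val, ilt_of_half hn ⟨w.val, hw1⟩⟩ : Fin n) = w := Fin.ext rfl
      rw [hww] at hcle
      omega

section lower
variable {n : ℕ} (g : ℕ → ℤ)

lemma g_lip_interval (hlip : ∀ t, (g (t+1) - g t).natAbs ≤ 1) :
    ∀ t s, (g (t + s) - g t).natAbs ≤ s := by
  intro t s
  induction s with
  | zero => simp
  | succ s IH =>
    have h1 := hlip (t + s)
    have e : t + (s + 1) = (t + s) + 1 := by omega
    rw [e]
    omega

lemma g_mono_up (hlip : ∀ t, (g (t+1) - g t).natAbs ≤ 1) {M : ℕ}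
    (t : ℕ) (ht : g (t + M) = g t + M) : ∀ s, s ≤ M → g (t + s) = g t + s := by
  intro s hs
  have l1 := g_lip_interval g hlip t s
  have l2 := g_lip_interval g hlip (t + s) (M - s)
  have e : t + s + (M - s) = t + M := by omega
  rw [e] at l2
  omega

lemma g_mono_down (hlip : ∀ t, (g (t+1) - g t).natAbs ≤ 1) {M : ℕ}
    (t : ℕ) (ht : g (t + M) = g t - M) : ∀ s, s ≤ M → g (t + s) = g t - s := by
  intro s hs
  have l1 := g_lip_interval g hlip t s
  have l2 := g_lip_interval g hlip (t + s) (M - s)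
  have e : t + s + (M - s) = t + M := by omega
  rw [e] at l2
  omega

lemma g_overlap (hn : 4 ≤ n) (hlip : ∀ t, (g (t+1) - g t).natAbs ≤ 1)
    (hper : ∀ t, g (t + n) = g t) (x y : ℕ) (hxy : x < y) (hyM : y < x + n/2)
    (hx : (g (x + n/2) - g x).natAbs = n/2)
    (hy : (g (y + n/2) - g y).natAbs = n/2) : False := by
  set M := n/2 with hM
  have hx' : g (x + M) = g x + M ∨ g (x + M) = g x - M := by omega
  have hy' : g (y + M) = g y + M ∨ g (y + M) = g y - M := by omega
  have exy : x + (y - x) = y := by omega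
  have exM : y + (x + M - y) = x + M := by omega
  have exn : (y + M) + (x + n - (y + M)) = x + n := by omega
  have lup := g_lip_interval g hlip (y + M) (x + n - (y + M))
  rw [exn, hper x] at lup
  rcases hx' with hx' | hx' <;> rcases hy' with hy' | hy'
  · have e1 := g_mono_up g hlip x hx' (y - x) (by omega)
    rw [exy] at e1
    omega
  · have e1 := g_mono_up g hlip x hx' (y - x) (by omega)
    rw [exy] at e1
    have e3 := g_mono_down g hlip y hy' (x + M - y) (by omega)
    rw [exM] at e3
    omega
  · have e1 := g_mono_down g hlip x hx' (y - x) (by omega)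
    rw [exy] at e1
    have e3 := g_mono_up g hlip y hy' (x + M - y) (by omega)
    rw [exM] at e3
    omega
  · have e1 := g_mono_down g hlip x hx' (y - x) (by omega)
    rw [exy] at e1
    omega

lemma g_no_three (hn : 4 ≤ n) (hlip : ∀ t, (g (t+1) - g t).natAbs ≤ 1)
    (hper : ∀ t, g (t + n) = g t) (a b c : ℕ) (hab : a < b) (hbc : b < c) (hc : c < n)
    (sa : (g (a + n/2) - g a).natAbs = n/2)
    (sb : (g (b + n/2) - g b).natAbs = n/2)
    (sc : (g (c + n/2) - g c).natAbs = n/2) : False := by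
  set M := n/2 with hM
  have d1 : ¬ b < a + M := fun h => g_overlap g hn hlip hper a b hab h sa sb
  have d2 : ¬ c < b + M := fun h => g_overlap g hn hlip hper b c hbc h sb sc
  have sa' : (g ((a + n) + M) - g (a + n)).natAbs = M := by
    have e : (a + n) + M = (a + M) + n := by omega
    rw [e, hper, hper]
    exact sa
  have d3 : ¬ (a + n) < c + M :=
    fun h => g_overlap g hn hlip hper c (a + n) (by omega) h sc sa'
  omega

end lower

lemma cd_add_one {n : ℕ} [NeZero n] (hn : 4 ≤ n) (a : Fin n) : cd n a (a + 1) = 1 := by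
  have h1 : (a + 1 - a).val = 1 := by
    have e : a + 1 - a = 1 := by ring
    rw [e, Fin.val_one']
    exact Nat.mod_eq_of_lt (by omega)
  rcases cd_vals a (a+1) with ⟨_, h2, _⟩ | ⟨_, _, _, h3⟩
  · omega
  · unfold cd; omega

lemma cd_add_half {n : ℕ} [NeZero n] (hn : 4 ≤ n) (a : Fin n) :
    cd n a (a + ((n/2 : ℕ) : Fin n)) = n / 2 := by
  have hMval : (((n/2 : ℕ) : ℕ) : Fin n).val = n/2 := by
    rw [Fin.val_natCast]
    exact Nat.mod_eq_of_lt (by omega)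
  have h1 : (a + ((n/2 : ℕ) : Fin n) - a).val = n/2 := by
    have e : a + ((n/2 : ℕ) : Fin n) - a = ((n/2 : ℕ) : Fin n) := by ring
    rw [e, hMval]
  rcases cd_vals a (a + ((n/2 : ℕ) : Fin n)) with ⟨_, h2, _⟩ | ⟨_, _, _, h3⟩
  · omega
  · unfold cd; omega

lemma sdim_lower {n : ℕ} (hn : 4 ≤ n) (k m : ℕ) (φ : Fin n → (Fin k → Fin m))
    (hφ : ∀ u v, (strongPow m k).dist (φ u) (φ v) = (cycleGraph n).dist u v) :
    (n+1)/2 ≤ k := by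
  haveI : NeZero n := ⟨by omega⟩
  have hch : ∀ u v, chebF (φ u) (φ v) = cd n u v := by
    intro u v; rw [← strongPow_dist_eq, hφ, cycle_dist_eq_cd hn]
  set g : Fin k → ℕ → ℤ := fun i t => ((φ ((t : ℕ) : Fin n) i : ℕ) : ℤ) with hg
  have hlip : ∀ i t, (g i (t+1) - g i t).natAbs ≤ 1 := by
    intro i t
    have hc : ((t+1 : ℕ) : Fin n) = ((t : ℕ) : Fin n) + 1 := by push_cast; ring
    have h1 := chebF_coord_le (φ ((t+1 : ℕ) : Fin n)) (φ ((t : ℕ) : Fin n)) i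
    have hcd : cd n ((t : ℕ) : Fin n) (((t+1 : ℕ)) : Fin n) = 1 := by
      rw [hc]; exact cd_add_one hn _
    rw [hch, cd_comm, hcd] at h1
    exact h1
  have hper : ∀ i t, g i (t + n) = g i t := by
    intro i t
    have hc : ((t+n : ℕ) : Fin n) = ((t : ℕ) : Fin n) := by
      push_cast [Fin.natCast_self]; ring
    simp only [hg, hc]
  have hk : 0 < k := by
    by_contra hk0
    have h1 := hch 0 (0 + ((n/2 : ℕ) : Fin n))
    rw [cd_add_half hn] at h1
    unfold chebF at h1
    rw [Finset.univ_eq_empty_iff.mpr ⟨fun i => absurd i.is_lt (by omega)⟩, Finset.sup_empty] at h1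
    rw [Nat.bot_eq_zero] at h1
    omega
  have hserve : ∀ j : Fin n, ∃ i : Fin k, (g i (j.val + n/2) - g i j.val).natAbs = n/2 := by
    intro j
    have hc1 : ((j.val : ℕ) : Fin n) = j := Fin.cast_val_eq_self j
    have hc2 : ((j.val + n/2 : ℕ) : Fin n) = j + ((n/2 : ℕ) : Fin n) := by push_cast [Fin.cast_val_eq_self]; ring
    have h1 := hch j (j + ((n/2 : ℕ) : Fin n))
    rw [cd_add_half hn] at h1
    obtain ⟨i, _, hi⟩ := Finset.exists_mem_eq_sup (Finset.univ : Finset (Fin k))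
      ⟨⟨0, hk⟩, Finset.mem_univ _⟩
      (fun i => ((φ j i : ℤ) - (φ (j + ((n/2 : ℕ) : Fin n)) i : ℤ)).natAbs)
    refine ⟨i, ?_⟩
    have h2 : ((φ j i : ℤ) - (φ (j + ((n/2 : ℕ) : Fin n)) i : ℤ)).natAbs = n/2 := by
      rw [← hi]
      unfold chebF at h1
      exact h1
    simp only [hg, hc1, hc2]
    omega
  choose ch hch2 using hserve
  have hfiber : ∀ i : Fin k,
      (Finset.univ.filter (fun j : Fin n => ch j = i)).card ≤ 2 := by
    intro i
    by_contra hgt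
    push_neg at hgt
    obtain ⟨a, b, c, ha, hb, hc, hab, hac, hbc⟩ := Finset.two_lt_card_iff.mp hgt
    simp only [Finset.mem_filter, Finset.mem_univ, true_and] at ha hb hc
    have sva := hch2 a; rw [ha] at sva
    have svb := hch2 b; rw [hb] at svb
    have svc := hch2 c; rw [hc] at svc
    have key : ∀ x y z : Fin n, x.val < y.val → y.val < z.val →
        (g i (x.val + n/2) - g i x.val).natAbs = n/2 →
        (g i (y.val + n/2) - g i y.val).natAbs = n/2 →
        (g i (z.val + n/2) - g i z.val).natAbs = n/2 → False := by
      intro x y z h1 h2 s1 s2 s3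
      exact g_no_three (g i) hn (hlip i) (hper i) x.val y.val z.val h1 h2 z.is_lt s1 s2 s3
    have hab' : a.val ≠ b.val := fun h => hab (Fin.ext h)
    have hac' : a.val ≠ c.val := fun h => hac (Fin.ext h)
    have hbc' : b.val ≠ c.val := fun h => hbc (Fin.ext h)
    rcases Nat.lt_trichotomy a.val b.val with h1 | h1 | h1
    · rcases Nat.lt_trichotomy b.val c.val with h2 | h2 | h2
      · exact key a b c h1 h2 sva svb svc
      · exact absurd h2 hbc'
      · rcases Nat.lt_trichotomy a.val c.val with h3 | h3 | h3
        · exact key a c b h3 h2 sva svc svb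
        · exact absurd h3 hac'
        · exact key c a b h3 h1 svc sva svb
    · exact absurd h1 hab'
    · rcases Nat.lt_trichotomy a.val c.val with h2 | h2 | h2
      · exact key b a c h1 h2 svb sva svc
      · exact absurd h2 hac'
      · rcases Nat.lt_trichotomy b.val c.val with h3 | h3 | h3
        · exact key b c a h3 h2 svb svc sva
        · exact absurd h3 hbc'
        · exact key c b a h3 h1 svc svb sva
  have hcount := Finset.card_eq_sum_card_fiberwise
    (s := (Finset.univ : Finset (Fin n))) (t := (Finset.univ : Finset (Fin k)))
    (f := ch) (fun x _ => Finset.mem_univ _)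
  have hsum : ∑ i : Fin k, (Finset.univ.filter (fun j : Fin n => ch j = i)).card
      ≤ ∑ _i : Fin k, 2 := Finset.sum_le_sum (fun i _ => hfiber i)
  rw [Finset.sum_const, Finset.card_univ, Fintype.card_fin, smul_eq_mul] at hsum
  rw [Finset.card_univ, Fintype.card_fin] at hcount
  have : n ≤ k * 2 := by omega
  omega

def cheb2 (p q : ℤ × ℤ) : ℕ := max (p.1 - q.1).natAbs (p.2 - q.2).natAbs

lemma cheb2_mk (x1 y1 x2 y2 : ℤ) :
    cheb2 (x1, y1) (x2, y2) = max (x1 - x2).natAbs (y1 - y2).natAbs := rfl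

def Psi (m : ℕ) (j : ℕ) : ℤ × ℤ :=
  if j < m then ((j : ℤ), (m : ℤ) - 1 - j)
  else if j < 2*m then (2*(m:ℤ) - j, (j : ℤ) - m + 1)
  else (1, (m : ℤ) - 1)

lemma psiA {m j : ℕ} (h : j < m) : Psi m j = ((j : ℤ), (m : ℤ) - 1 - j) := by
  unfold Psi; rw [if_pos h]

lemma psiB {m j : ℕ} (h1 : m ≤ j) (h2 : j < 2*m) :
    Psi m j = (2*(m:ℤ) - j, (j : ℤ) - m + 1) := by
  unfold Psi; rw [if_neg (by omega), if_pos h2]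

lemma psiE {m j : ℕ} (h : 2*m ≤ j) : Psi m j = (1, (m : ℤ) - 1) := by
  unfold Psi; rw [if_neg (by omega), if_neg (by omega)]

lemma psi_inj {n : ℕ} (hn : 4 ≤ n) {j1 j2 : ℕ} (h1 : j1 < n) (h2 : j2 < n)
    (h : Psi (n/2) j1 = Psi (n/2) j2) : j1 = j2 := by
  have hm : 2 ≤ n/2 := by omega
  have hn2 : n = 2*(n/2) ∨ n = 2*(n/2)+1 := by omega
  unfold Psi at h
  split_ifs at h <;> (rw [Prod.mk.injEq] at h; omega)

def cycH (n : ℕ) : SimpleGraph (Fin n) where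
  Adj u v := Psi (n/2) u.val ≠ Psi (n/2) v.val ∧
    cheb2 (Psi (n/2) u.val) (Psi (n/2) v.val) ≤ 1
  symm := ⟨by
    intro u v h
    refine ⟨h.1.symm, ?_⟩
    have := h.2
    unfold cheb2 at *
    omega⟩
  loopless := ⟨fun u h => h.1 rfl⟩

lemma psi_step_nat {n : ℕ} (hn : 4 ≤ n) (a b : ℕ) (ha : a < n) (hb : b < n)
    (hab : a ≠ b) :
    ∃ c, c < n ∧ Psi (n/2) a ≠ Psi (n/2) c ∧ cheb2 (Psi (n/2) a) (Psi (n/2) c) ≤ 1 ∧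
      cheb2 (Psi (n/2) c) (Psi (n/2) b) < cheb2 (Psi (n/2) a) (Psi (n/2) b) := by
  have hm : 2 ≤ n/2 := by omega
  set m := n/2 with hmdef
  have hn2 : n = 2*m ∨ n = 2*m+1 := by omega
  rcases Nat.lt_or_ge a m with haA | haB
  · rcases Nat.lt_or_ge b m with hbA | hbB
    · -- A-A
      rcases Nat.lt_or_ge a b with hlt | hge
      · refine ⟨a+1, by omega, ?_, ?_, ?_⟩ <;>
          simp only [psiA haA, psiA hbA, psiA (show a+1 < m by omega), cheb2_mk] <;>
          first
          | (intro hEq; rw [Prod.mk.injEq] at hEq; omega)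
          | omega
      · refine ⟨a-1, by omega, ?_, ?_, ?_⟩ <;>
          simp only [psiA haA, psiA hbA, psiA (show a-1 < m by omega), cheb2_mk] <;>
          first
          | (intro hEq; rw [Prod.mk.injEq] at hEq; omega)
          | omega
    · rcases Nat.lt_or_ge b (2*m) with hbB2 | hbE
      · -- A-B
        rcases Nat.lt_trichotomy (a + b) (2*m - 1) with hd | hd | hd
        · -- d ≥ 2 : c = a+1
          refine ⟨a+1, by omega, ?_, ?_, ?_⟩ <;>
            simp only [psiA haA, psiB hbB hbB2, psiA (show a+1 < m by omega), cheb2_mk] <;>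
            first
            | (intro hEq; rw [Prod.mk.injEq] at hEq; omega)
            | omega
        · -- d = 1 : c = b
          refine ⟨b, by omega, ?_, ?_, ?_⟩ <;>
            simp only [psiA haA, psiB hbB hbB2, cheb2_mk] <;>
            first
            | (intro hEq; rw [Prod.mk.injEq] at hEq; omega)
            | omega
        · -- d ≤ 0 : c = a-1
          refine ⟨a-1, by omega, ?_, ?_, ?_⟩ <;>
            simp only [psiA haA, psiB hbB hbB2, psiA (show a-1 < m by omega), cheb2_mk] <;>
            first
            | (intro hEq; rw [Prod.mk.injEq] at hEq; omega)
            | omega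
      · -- A-E
        rcases Nat.lt_or_ge a 2 with ha2 | ha2
        · refine ⟨b, by omega, ?_, ?_, ?_⟩ <;>
            simp only [psiA haA, psiE hbE, cheb2_mk] <;>
            first
            | (intro hEq; rw [Prod.mk.injEq] at hEq; omega)
            | omega
        · refine ⟨a-1, by omega, ?_, ?_, ?_⟩ <;>
            simp only [psiA haA, psiE hbE, psiA (show a-1 < m by omega), cheb2_mk] <;>
            first
            | (intro hEq; rw [Prod.mk.injEq] at hEq; omega)
            | omega
  · rcases Nat.lt_or_ge a (2*m) with haB2 | haE
    · rcases Nat.lt_or_ge b m with hbA | hbB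
      · -- B-A
        rcases Nat.lt_trichotomy (a + b) (2*m - 1) with hd | hd | hd
        · refine ⟨a+1, by omega, ?_, ?_, ?_⟩ <;>
            simp only [psiB haB haB2, psiA hbA, psiB (show m ≤ a+1 by omega) (show a+1 < 2*m by omega), cheb2_mk] <;>
            first
            | (intro hEq; rw [Prod.mk.injEq] at hEq; omega)
            | omega
        · refine ⟨b, by omega, ?_, ?_, ?_⟩ <;>
            simp only [psiB haB haB2, psiA hbA, cheb2_mk] <;>
            first
            | (intro hEq; rw [Prod.mk.injEq] at hEq; omega)
            | omega
        · refine ⟨a-1, by omega, ?_, ?_, ?_⟩ <;>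
            simp only [psiB haB haB2, psiA hbA, psiB (show m ≤ a-1 by omega) (show a-1 < 2*m by omega), cheb2_mk] <;>
            first
            | (intro hEq; rw [Prod.mk.injEq] at hEq; omega)
            | omega
      · rcases Nat.lt_or_ge b (2*m) with hbB2 | hbE
        · -- B-B
          rcases Nat.lt_or_ge a b with hlt | hge
          · refine ⟨a+1, by omega, ?_, ?_, ?_⟩ <;>
              simp only [psiB haB haB2, psiB hbB hbB2, psiB (show m ≤ a+1 by omega) (show a+1 < 2*m by omega), cheb2_mk] <;>
              first
              | (intro hEq; rw [Prod.mk.injEq] at hEq; omega)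
              | omega
          · refine ⟨a-1, by omega, ?_, ?_, ?_⟩ <;>
              simp only [psiB haB haB2, psiB hbB hbB2, psiB (show m ≤ a-1 by omega) (show a-1 < 2*m by omega), cheb2_mk] <;>
              first
              | (intro hEq; rw [Prod.mk.injEq] at hEq; omega)
              | omega
        · -- B-E
          rcases Nat.lt_or_ge a (2*m - 2) with ha2 | ha2
          · refine ⟨a+1, by omega, ?_, ?_, ?_⟩ <;>
              simp only [psiB haB haB2, psiE hbE, psiB (show m ≤ a+1 by omega) (show a+1 < 2*m by omega), cheb2_mk] <;>
              first
              | (intro hEq; rw [Prod.mk.injEq] at hEq; omega)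
              | omega
          · refine ⟨b, by omega, ?_, ?_, ?_⟩ <;>
              simp only [psiB haB haB2, psiE hbE, cheb2_mk] <;>
              first
              | (intro hEq; rw [Prod.mk.injEq] at hEq; omega)
              | omega
    · -- E-*
      rcases Nat.lt_or_ge b m with hbA | hbB
      · rcases Nat.lt_or_ge b 2 with hb2 | hb2
        · refine ⟨b, by omega, ?_, ?_, ?_⟩ <;>
            simp only [psiE haE, psiA hbA, cheb2_mk] <;>
            first
            | (intro hEq; rw [Prod.mk.injEq] at hEq; omega)
            | omega
        · refine ⟨1, by omega, ?_, ?_, ?_⟩ <;>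
            simp only [psiE haE, psiA hbA, psiA (show (1:ℕ) < m by omega), cheb2_mk] <;>
            first
            | (intro hEq; rw [Prod.mk.injEq] at hEq; omega)
            | omega
      · rcases Nat.lt_or_ge b (2*m) with hbB2 | hbE
        · rcases Nat.lt_or_ge b (2*m - 2) with hb2 | hb2
          · refine ⟨2*m-2, by omega, ?_, ?_, ?_⟩ <;>
              simp only [psiE haE, psiB hbB hbB2, psiB (show m ≤ 2*m-2 by omega) (show 2*m-2 < 2*m by omega), cheb2_mk] <;>
              first
              | (intro hEq; rw [Prod.mk.injEq] at hEq; omega)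
              | omega
          · refine ⟨b, by omega, ?_, ?_, ?_⟩ <;>
              simp only [psiE haE, psiB hbB hbB2, cheb2_mk] <;>
              first
              | (intro hEq; rw [Prod.mk.injEq] at hEq; omega)
              | omega
        · -- E-E : impossible
          exact absurd (by omega : a = b) hab

lemma cycH_reach_dist {n : ℕ} (hn : 4 ≤ n) (u v : Fin n) :
    (cycH n).Reachable u v ∧
      (cycH n).dist u v = cheb2 (Psi (n/2) u.val) (Psi (n/2) v.val) := by
  have hstep : ∀ x y : Fin n, x ≠ y → ∃ x', (cycH n).Adj x x' ∧
      cheb2 (Psi (n/2) x'.val) (Psi (n/2) y.val)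
        < cheb2 (Psi (n/2) x.val) (Psi (n/2) y.val) := by
    intro x y hxy
    have hab : x.val ≠ y.val := fun h => hxy (Fin.ext h)
    obtain ⟨c, hc, h1, h2, h3⟩ := psi_step_nat hn x.val y.val x.is_lt y.is_lt hab
    exact ⟨⟨c, hc⟩, ⟨h1, h2⟩, h3⟩
  have hup := reach_and_dist_le_of_step (cycH n)
    (fun x y => cheb2 (Psi (n/2) x.val) (Psi (n/2) y.val)) hstep u v
  refine ⟨hup.1, le_antisymm hup.2 ?_⟩
  obtain ⟨p, hp⟩ := hup.1.exists_walk_length_eq_dist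
  have hx := natAbs_le_walk_length (G := cycH n) (fun z => (Psi (n/2) z.val).1)
    (fun a b h => by have := h.2; unfold cheb2 at this; beta_reduce; omega) p
  have hy := natAbs_le_walk_length (G := cycH n) (fun z => (Psi (n/2) z.val).2)
    (fun a b h => by have := h.2; unfold cheb2 at this; beta_reduce; omega) p
  rw [hp] at hx hy
  unfold cheb2
  omega

lemma cycle_le_cycH {n : ℕ} (hn : 4 ≤ n) : cycleGraph n ≤ cycH n := by
  have hm : 2 ≤ n/2 := by omega
  have hn2 : n = 2*(n/2) ∨ n = 2*(n/2)+1 := by omega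
  have hcons : ∀ j : ℕ, j + 1 < n →
      Psi (n/2) j ≠ Psi (n/2) (j+1) ∧ cheb2 (Psi (n/2) j) (Psi (n/2) (j+1)) ≤ 1 := by
    intro j hj
    constructor
    · intro hEq
      unfold Psi at hEq
      split_ifs at hEq <;> (rw [Prod.mk.injEq] at hEq; omega)
    · unfold Psi cheb2
      split_ifs <;> (dsimp only; omega)
  have hwrap : Psi (n/2) (n-1) ≠ Psi (n/2) 0 ∧
      cheb2 (Psi (n/2) (n-1)) (Psi (n/2) 0) ≤ 1 := by
    constructor
    · intro hEq
      unfold Psi at hEq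
      split_ifs at hEq <;> (rw [Prod.mk.injEq] at hEq; omega)
    · unfold Psi cheb2
      split_ifs <;> (dsimp only; omega)
  intro u v hadj
  rw [cycleGraph_adj'] at hadj
  have hu := u.is_lt
  have hv := v.is_lt
  have e1 := fin_sub_val u v
  have e2 := fin_sub_val v u
  have hvals : (v.val = u.val + 1) ∨ (u.val = v.val + 1) ∨
      (u.val = n - 1 ∧ v.val = 0) ∨ (v.val = n - 1 ∧ u.val = 0) := by
    rcases hadj with h | h <;> (split at e1 <;> split at e2 <;> omega)
  show Psi (n/2) u.val ≠ Psi (n/2) v.val ∧ _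
  rcases hvals with h | h | ⟨h1, h2⟩ | ⟨h1, h2⟩
  · rw [h]; exact hcons u.val (by omega)
  · rw [h]
    obtain ⟨hh1, hh2⟩ := hcons v.val (by omega)
    refine ⟨hh1.symm, ?_⟩
    unfold cheb2 at *
    omega
  · rw [h1, h2]; exact hwrap
  · rw [h1, h2]
    obtain ⟨hh1, hh2⟩ := hwrap
    refine ⟨hh1.symm, ?_⟩
    unfold cheb2 at *
    omega

lemma psi_corner1 {n : ℕ} (hn : 4 ≤ n) (j : ℕ) (hj : j < n) :
    (cheb2 (Psi (n/2) j) (Psi (n/2) 0) : ℤ) = (Psi (n/2) j).1 := by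
  have hm : 2 ≤ n/2 := by omega
  have hn2 : n = 2*(n/2) ∨ n = 2*(n/2)+1 := by omega
  unfold Psi cheb2
  split_ifs <;> (dsimp only; omega)

lemma psi_corner2 {n : ℕ} (hn : 4 ≤ n) (j : ℕ) (hj : j < n) :
    (cheb2 (Psi (n/2) j) (Psi (n/2) (n/2 - 1)) : ℤ) = (Psi (n/2) j).2 := by
  have hm : 2 ≤ n/2 := by omega
  have hn2 : n = 2*(n/2) ∨ n = 2*(n/2)+1 := by omega
  unfold Psi cheb2
  split_ifs <;> (dsimp only; omega)

lemma cycH_resolving {n : ℕ} (hn : 4 ≤ n) :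
    isStrongResolvingSet (cycH n)
      ↑({⟨0, by omega⟩, ⟨n/2 - 1, by omega⟩} : Finset (Fin n)) := by
  intro u v huv
  unfold stronglyResolves
  have hdist := fun (x y : Fin n) => (cycH_reach_dist hn x y).2
  have hc1u := psi_corner1 hn u.val u.is_lt
  have hc1v := psi_corner1 hn v.val v.is_lt
  have hc2u := psi_corner2 hn u.val u.is_lt
  have hc2v := psi_corner2 hn v.val v.is_lt
  have hduv := hdist u v
  have hdvu := hdist v u
  unfold cheb2 at hduv hdvu
  by_cases hcase : ((Psi (n/2) u.val).2 - (Psi (n/2) v.val).2).natAbs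
      ≤ ((Psi (n/2) u.val).1 - (Psi (n/2) v.val).1).natAbs
  · set w1 : Fin n := ⟨0, by omega⟩ with hw1def
    refine ⟨w1, Finset.mem_coe.mpr (Finset.mem_insert_self _ _), ?_⟩
    have h1 := hdist u w1
    have h2 := hdist v w1
    have ev : w1.val = 0 := rfl
    rw [ev] at h1 h2
    omega
  · set w2 : Fin n := ⟨n/2 - 1, by omega⟩ with hw2def
    refine ⟨w2,
      Finset.mem_coe.mpr (Finset.mem_insert_of_mem (Finset.mem_singleton_self _)), ?_⟩
    have h1 := hdist u w2
    have h2 := hdist v w2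
    have ev : w2.val = n/2 - 1 := rfl
    rw [ev] at h1 h2
    omega

lemma threshold_not_one {n : ℕ} (hn : 4 ≤ n) (H : SimpleGraph (Fin n))
    (hle : cycleGraph n ≤ H) (w : Fin n)
    (hres : isStrongResolvingSet H {w}) : False := by
  haveI : NeZero n := ⟨by omega⟩
  have hconn : H.Connected := by
    rw [connected_iff]
    exact ⟨fun a b => (cycle_reachable hn a b).mono hle, ⟨⟨0, by omega⟩⟩⟩
  set f : Fin n → ℕ := fun x => H.dist x w with hf
  have hinj : ∀ x y : Fin n, x ≠ y → f x ≠ f y := by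
    intro x y hxy hfeq
    obtain ⟨w', hw', hsr⟩ := hres x y hxy
    rw [Set.mem_singleton_iff] at hw'
    subst hw'
    unfold stronglyResolves at hsr
    have hpos := hconn.pos_dist_of_ne hxy
    have hpos' := hconn.pos_dist_of_ne (Ne.symm hxy)
    simp only [hf] at hfeq
    omega
  obtain ⟨z, _, hz⟩ := Finset.exists_max_image Finset.univ f ⟨w, Finset.mem_univ w⟩
  have hadj1 : H.Adj z (z + 1) := hle (cycle_adj_succ hn z)
  have hadj2 : H.Adj z (z - 1) := by
    have h := cycle_adj_succ hn (z - 1)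
    rw [sub_add_cancel] at h
    exact hle h.symm
  have hstep : ∀ y : Fin n, H.Adj z y → f y + 1 = f z := by
    intro y hadj
    have h1 : f y ≤ f z := hz y (Finset.mem_univ y)
    have h2 : H.dist z w ≤ H.dist z y + H.dist y w := hconn.dist_triangle
    have h3 : H.dist z y = 1 := dist_eq_one_iff_adj.mpr hadj
    have h4 := hinj y z hadj.ne'
    simp only [hf] at *
    omega
  have hy1 := hstep _ hadj1
  have hy2 := hstep _ hadj2
  have heq : z + 1 = z - 1 := by
    by_contra hne
    exact hinj _ _ hne (by omega)
  have hone : (1 : Fin n).val = 1 := by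
    rw [Fin.val_one']; exact Nat.mod_eq_of_lt (by omega)
  have hval := congrArg Fin.val heq
  have hv1 : (z + 1).val = (z.val + 1) % n := by rw [Fin.val_add, hone]
  have hv2 := fin_sub_val z 1
  rw [hone] at hv2
  have hz' := z.is_lt
  rcases Nat.lt_or_ge (z.val + 1) n with hlt | hge
  · rw [hv1, Nat.mod_eq_of_lt hlt] at hval
    rw [hv2] at hval
    split at hval <;> omega
  · have he : z.val + 1 = n := by omega
    rw [hv1, he, Nat.mod_self] at hval
    rw [hv2] at hval
    split at hval <;> omega


/-- For every cycle `C_n` with `n ≥ 4`, `τ_s(C_n) = 2` while `sdim(C_n) = ⌈n/2⌉`. -/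
theorem cycle_thresholdStrongDim_and_strongIsoDim (n : ℕ) (hn : 4 ≤ n) :
    thresholdStrongDim (Fin n) (SimpleGraph.cycleGraph n) = 2 ∧
    strongIsoDim (Fin n) (SimpleGraph.cycleGraph n) = (n + 1) / 2 := by
  constructor
  · -- threshold strong dimension
    have hmem : 2 ∈ {k | ∃ H : SimpleGraph (Fin n), SimpleGraph.cycleGraph n ≤ H ∧
        ∃ W : Finset (Fin n), W.card = 2 ∧ isStrongResolvingSet H ↑W} := by
      refine ⟨cycH n, cycle_le_cycH hn,
        {⟨0, by omega⟩, ⟨n/2 - 1, by omega⟩}, ?_, cycH_resolving hn⟩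
      rw [Finset.card_insert_of_notMem, Finset.card_singleton]
      simp only [Finset.mem_singleton, Fin.mk.injEq]
      omega
    refine le_antisymm (Nat.sInf_le hmem) (le_csInf ⟨2, hmem⟩ ?_)
    rintro x ⟨H, hle, W, hWcard, hres⟩
    by_contra hx
    push_neg at hx
    interval_cases x
    · rw [Finset.card_eq_zero] at hWcard
      subst hWcard
      obtain ⟨w, hw, -⟩ := hres ⟨0, by omega⟩ ⟨1, by omega⟩
        (by intro h; rw [Fin.mk.injEq] at h; omega)
      simp at hw
    · obtain ⟨w, hWw⟩ := Finset.card_eq_one.mp hWcard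
      subst hWw
      rw [Finset.coe_singleton] at hres
      exact threshold_not_one hn H hle w hres
  · -- strong isometric dimension
    have hmem : (n+1)/2 ∈ {k | ∃ (m : ℕ) (φ : Fin n → (Fin k → Fin m)),
        ∀ u v : Fin n, (strongPow m k).dist (φ u) (φ v)
          = (SimpleGraph.cycleGraph n).dist u v} := sdim_mem hn
    refine le_antisymm (Nat.sInf_le hmem) (le_csInf ⟨_, hmem⟩ ?_)
    rintro k ⟨m, φ, hφ⟩
    exact sdim_lower hn k m φ hφ
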